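/- Let G = (V, E) be a finite acyclic digraph with exactly one source s, and let (V1, E1), (V2, E2) be a separation of G along a pair {u, v} of distinct vertices with s ∈ V1. Assume that v does not dominate u in G. Define H1* = (V1, E1 ∪ {(u, v)}) if v has at least one incoming edge in E2, and H1* = (V1, E1) otherwise. Then for all vertices x, y ∈ V1, x dominates y in H1* if and only if x dominates y in G. -/

import Mathlib

/-- `x` dominates `y` in the digraph with edge set `E`: there is a directed
path with at least one edge from `x` to `y`. -/
def Dominates {α : Type*} (E : Finset (α × α)) (x y : α) : Prop :=
  Relation.TransGen (fun a b => (a, b) ∈ E) x y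

/-- A separation of the finite digraph `(V, E)` along the pair `{u, v}` of
distinct vertices into `H1 = (V1, E1)` and `H2 = (V2, E2)`. -/
structure Separation {α : Type*} [DecidableEq α] (V : Finset α) (E : Finset (α × α))
    (u v : α) (V1 V2 : Finset α) (E1 E2 : Finset (α × α)) : Prop where
  ne : u ≠ v
  vUnion : V1 ∪ V2 = V
  vInter : V1 ∩ V2 = {u, v}
  eDisjoint : Disjoint E1 E2
  eUnion : E1 ∪ E2 = E
  mem1 : ∀ e ∈ E1, e.1 ∈ V1 ∧ e.2 ∈ V1
  mem2 : ∀ e ∈ E2, e.1 ∈ V2 ∧ e.2 ∈ V2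
/-- A vertex `w` is a source of the digraph `(V, E)`: it belongs to `V` and
has no incoming edge in `E`. -/
def IsSource {α : Type*} (V : Finset α) (E : Finset (α × α)) (w : α) : Prop :=
  w ∈ V ∧ ∀ e ∈ E, e.2 ≠ w

/-- Monotonicity of transitive closure into a transitive closure. -/
lemma transGen_lift {α : Type*} {r r' : α → α → Prop}
    (h : ∀ a b, r a b → Relation.TransGen r' a b) {x y : α}
    (hxy : Relation.TransGen r x y) : Relation.TransGen r' x y := by
  induction hxy with
  | single h1 => exact h _ _ h1
  | tail _ h1 ih => exact ih.trans (h _ _ h1)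

/-- The key backward lemma: dominance in `G` between `V1` vertices implies
dominance in any digraph `F` containing `E1` in which `u` dominates `v`
(whenever `v` has an incoming `E2`-edge). -/
lemma backward_lemma {α : Type*} [DecidableEq α] (V V1 V2 : Finset α)
    (E E1 E2 : Finset (α × α)) (u v : α)
    (hsep : Separation V E u v V1 V2 E1 E2)
    (hacyc : ∀ x : α, ¬ Dominates E x x)
    (hnd : ¬ Dominates E v u)
    (F : Finset (α × α)) (hE1F : E1 ⊆ F)
    (huv : (∃ e ∈ E2, e.2 = v) → Dominates F u v) :
    ∀ y ∈ V1, ∀ x ∈ V1, Dominates E x y → Dominates F x y := by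
  intro y hy x hx hxy
  -- strengthened invariant for head induction
  have hEsplit : ∀ a b : α, (a, b) ∈ E → (a, b) ∈ E1 ∨ (a, b) ∈ E2 := by
    intro a b hab
    rw [← hsep.eUnion] at hab
    exact Finset.mem_union.1 hab
  have hE2E : ∀ p q : α, Relation.TransGen (fun a b => (a, b) ∈ E2) p q →
      Dominates E p q := by
    intro p q h
    refine transGen_lift (fun a b hab => Relation.TransGen.single ?_) h
    rw [← hsep.eUnion]; exact Finset.mem_union_right _ hab
  have hE2first : ∀ p q : α, Relation.TransGen (fun a b => (a, b) ∈ E2) p q →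
      ∃ c, (p, c) ∈ E2 := by
    intro p q h
    induction h with
    | single h1 => exact ⟨_, h1⟩
    | tail _ _ ih => exact ih
  have hE2last : ∀ p q : α, Relation.TransGen (fun a b => (a, b) ∈ E2) p q →
      ∃ e ∈ E2, e.2 = q := by
    intro p q h
    induction h with
    | single h1 => exact ⟨_, h1, rfl⟩
    | tail _ h1 _ => exact ⟨_, h1, rfl⟩
  have hinter : ∀ w : α, w ∈ V1 → w ∈ V2 → w = u ∨ w = v := by
    intro w h1 h2
    have : w ∈ V1 ∩ V2 := Finset.mem_inter.2 ⟨h1, h2⟩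
    rw [hsep.vInter] at this
    simpa using this
  -- resolve an E2-path between cut vertices
  have hresolve : ∀ c q : α, (c = u ∨ c = v) → (q = u ∨ q = v) →
      Relation.TransGen (fun a b => (a, b) ∈ E2) c q →
      Dominates F c q := by
    intro c q hc hq hcq
    rcases hc with rfl | rfl <;> rcases hq with rfl | rfl
    · exact absurd (hE2E _ _ hcq) (hacyc _)
    · exact huv (hE2last _ _ hcq)
    · exact absurd (hE2E _ _ hcq) hnd
    · exact absurd (hE2E _ _ hcq) (hacyc _)
  have main : (x ∈ V1 ∧ Dominates F x y) ∨
      (∃ q, (q = u ∨ q = v) ∧ Relation.TransGen (fun a b => (a, b) ∈ E2) x q ∧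
        (q = y ∨ Dominates F q y)) := by
    refine Relation.TransGen.head_induction_on (motive := fun a _ =>
      (a ∈ V1 ∧ Dominates F a y) ∨
      (∃ q, (q = u ∨ q = v) ∧ Relation.TransGen (fun a b => (a, b) ∈ E2) a q ∧
        (q = y ∨ Dominates F q y))) hxy ?_ ?_
    · intro a hay
      rcases hEsplit a y hay with h1 | h2
      · exact Or.inl ⟨(hsep.mem1 _ h1).1, Relation.TransGen.single (hE1F h1)⟩
      · refine Or.inr ⟨y, ?_, Relation.TransGen.single h2, Or.inl rfl⟩
        exact hinter y hy (hsep.mem2 _ h2).2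
    · intro a c hac _ ih
      rcases hEsplit a c hac with h1 | h2
      · -- edge a→c in E1
        rcases ih with ⟨_, hcy⟩ | ⟨q, hq, hcq, hqy⟩
        · exact Or.inl ⟨(hsep.mem1 _ h1).1, hcy.head (hE1F h1)⟩
        · have hcV1 : c ∈ V1 := (hsep.mem1 _ h1).2
          obtain ⟨c', hc'⟩ := hE2first _ _ hcq
          have hcV2 : c ∈ V2 := (hsep.mem2 _ hc').1
          have hcqF := hresolve c q (hinter c hcV1 hcV2) hq hcq
          have h0 : Dominates F a q :=
            (Relation.TransGen.single (hE1F h1)).trans hcqF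
          have hFay : Dominates F a y := by
            rcases hqy with h | h
            · rw [← h]; exact h0
            · exact h0.trans h
          exact Or.inl ⟨(hsep.mem1 _ h1).1, hFay⟩
      · -- edge a→c in E2
        rcases ih with ⟨hcV1, hcy⟩ | ⟨q, hq, hcq, hqy⟩
        · refine Or.inr ⟨c, hinter c hcV1 (hsep.mem2 _ h2).2,
            Relation.TransGen.single h2, Or.inr hcy⟩
        · exact Or.inr ⟨q, hq, hcq.head h2, hqy⟩
  rcases main with ⟨_, h⟩ | ⟨q, hq, hxq, hqy⟩
  · exact h
  · obtain ⟨x', hx'⟩ := hE2first _ _ hxq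
    have hxV2 : x ∈ V2 := (hsep.mem2 _ hx').1
    have hxqF := hresolve x q (hinter x hx hxV2) hq hxq
    rcases hqy with h | h
    · rw [← h]; exact hxqF
    · exact hxqF.trans h

/-- If `G` is an acyclic single-source digraph with its source in `V1` and `v`
does not dominate `u` in `G`, then dominance on `V1` is the same in `H1*` as
in `G`, where `H1* = (V1, E1 ∪ {(u, v)})` if `v` has an incoming edge in `E2`
and `H1* = (V1, E1)` otherwise. -/
theorem stmt6 {α : Type*} [DecidableEq α] (V V1 V2 : Finset α)
    (E E1 E2 : Finset (α × α)) (u v s : α)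
    (hsep : Separation V E u v V1 V2 E1 E2)
    (hacyc : ∀ x : α, ¬ Dominates E x x)
    (hsrc : IsSource V E s) (huniq : ∀ w : α, IsSource V E w → w = s)
    (hs1 : s ∈ V1)
    (hnd : ¬ Dominates E v u) :
    ((∃ e ∈ E2, e.2 = v) →
      ∀ x ∈ V1, ∀ y ∈ V1, (Dominates (insert (u, v) E1) x y ↔ Dominates E x y)) ∧
    (¬ (∃ e ∈ E2, e.2 = v) →
      ∀ x ∈ V1, ∀ y ∈ V1, (Dominates E1 x y ↔ Dominates E x y)) := by
  classical
  have hmemV : ∀ e ∈ E, e.1 ∈ V ∧ e.2 ∈ V := by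
    intro e he
    rw [← hsep.eUnion] at he
    have h1 : V1 ⊆ V := hsep.vUnion ▸ Finset.subset_union_left
    have h2 : V2 ⊆ V := hsep.vUnion ▸ Finset.subset_union_right
    rcases Finset.mem_union.1 he with h | h
    · exact ⟨h1 (hsep.mem1 _ h).1, h1 (hsep.mem1 _ h).2⟩
    · exact ⟨h2 (hsep.mem2 _ h).1, h2 (hsep.mem2 _ h).2⟩
  -- every vertex is the source or dominated by the source
  have src_dom : ∀ w ∈ V, w = s ∨ Dominates E s w := by
    have key : ∀ n, ∀ w ∈ V,
        (V.filter (fun a => Dominates E a w)).card ≤ n → w = s ∨ Dominates E s w := by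
      intro n
      induction n with
      | zero =>
        intro w hw hcard
        left
        refine huniq w ⟨hw, fun e he h2 => ?_⟩
        have : e.1 ∈ V.filter (fun a => Dominates E a w) := by
          refine Finset.mem_filter.2 ⟨(hmemV e he).1, Relation.TransGen.single ?_⟩
          rw [← h2]; exact he
        have := Finset.card_pos.2 ⟨_, this⟩
        omega
      | succ n ih =>
        intro w hw hcard
        by_cases hW : ∀ e ∈ E, e.2 ≠ w
        · exact Or.inl (huniq w ⟨hw, hW⟩)
        · push_neg at hW
          obtain ⟨e, he, heq⟩ := hW
          have hedge : (e.1, w) ∈ E := by rw [← heq]; exact he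
          have hdomw : Dominates E e.1 w := Relation.TransGen.single hedge
          have hsub : V.filter (fun a => Dominates E a e.1) ⊂
              V.filter (fun a => Dominates E a w) := by
            constructor
            · intro a ha
              have ha' := Finset.mem_filter.1 ha
              exact Finset.mem_filter.2 ⟨ha'.1, ha'.2.tail hedge⟩
            · intro hsub'
              have h1 : e.1 ∈ V.filter (fun a => Dominates E a w) :=
                Finset.mem_filter.2 ⟨(hmemV e he).1, hdomw⟩
              have h2 := Finset.mem_filter.1 (hsub' h1)
              exact hacyc e.1 h2.2
          have hlt := Finset.card_lt_card hsub
          rcases ih e.1 (hmemV e he).1 (by omega) with rfl | hdom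
          · exact Or.inr hdomw
          · exact Or.inr (hdom.tail hedge)
    intro w hw
    exact key _ w hw le_rfl
  have hinter : ∀ w : α, w ∈ V1 → w ∈ V2 → w = u ∨ w = v := by
    intro w h1 h2
    have : w ∈ V1 ∩ V2 := Finset.mem_inter.2 ⟨h1, h2⟩
    rw [hsep.vInter] at this
    simpa using this
  have hEsplit : ∀ a b : α, (a, b) ∈ E → (a, b) ∈ E1 ∨ (a, b) ∈ E2 := by
    intro a b hab
    rw [← hsep.eUnion] at hab
    exact Finset.mem_union.1 hab
  -- D: vertices of V2 \ V1 reachable from s are dominated by u or v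
  have lemD : ∀ b : α, Dominates E s b → b ∈ V2 → b ∉ V1 →
      (Dominates E u b ∨ Dominates E v b) := by
    intro b hb
    induction hb with
    | @single b hsb =>
      intro hb2 hb1
      rcases hEsplit _ _ hsb with h1 | h2
      · exact absurd (hsep.mem1 _ h1).2 hb1
      · have hs2 : s ∈ V2 := (hsep.mem2 _ h2).1
        rcases hinter s hs1 hs2 with rfl | rfl
        · exact Or.inl (Relation.TransGen.single hsb)
        · exact Or.inr (Relation.TransGen.single hsb)
    | @tail b c hsb hbc ih =>
      intro hc2 hc1
      rcases hEsplit _ _ hbc with h1 | h2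
      · exact absurd (hsep.mem1 _ h1).2 hc1
      · have hb2 : b ∈ V2 := (hsep.mem2 _ h2).1
        by_cases hb1 : b ∈ V1
        · rcases hinter _ hb1 hb2 with rfl | rfl
          · exact Or.inl (Relation.TransGen.single hbc)
          · exact Or.inr (Relation.TransGen.single hbc)
        · rcases ih hb2 hb1 with h | h
          · exact Or.inl (h.tail hbc)
          · exact Or.inr (h.tail hbc)
  -- If v has an incoming edge in E2 then u dominates v in E
  have huvE : (∃ e ∈ E2, e.2 = v) → Dominates E u v := by
    rintro ⟨e, he2, heq⟩
    have heE : (e.1, v) ∈ E := by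
      rw [← hsep.eUnion]
      refine Finset.mem_union_right _ ?_
      rw [← heq]; exact he2
    have hwV2 : e.1 ∈ V2 := (hsep.mem2 _ he2).1
    by_cases hwV1 : e.1 ∈ V1
    · rcases hinter _ hwV1 hwV2 with h | h
      · rw [h] at heE; exact Relation.TransGen.single heE
      · rw [h] at heE
        exact absurd (Relation.TransGen.single heE) (hacyc v)
    · have hwV : e.1 ∈ V := by
        have h2 : V2 ⊆ V := hsep.vUnion ▸ Finset.subset_union_right
        exact h2 hwV2
      rcases src_dom _ hwV with rfl | hdom
      · exact absurd hs1 hwV1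
      · rcases lemD _ hdom hwV2 hwV1 with h | h
        · exact h.tail heE
        · exact absurd (h.tail heE) (hacyc v)
  constructor
  · intro hex x hx y hy
    constructor
    · -- forward: H1* dominance implies G dominance
      intro h
      refine transGen_lift (fun a b hab => ?_) h
      rcases Finset.mem_insert.1 hab with h' | h'
      · obtain ⟨rfl, rfl⟩ := Prod.mk.injEq .. ▸ h'
        exact huvE hex
      · refine Relation.TransGen.single ?_
        rw [← hsep.eUnion]; exact Finset.mem_union_left _ h'
    · intro h
      refine backward_lemma V V1 V2 E E1 E2 u v hsep hacyc hnd _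
        (Finset.subset_insert _ _) (fun _ => Relation.TransGen.single ?_) y hy x hx h
      exact Finset.mem_insert_self _ _
  · intro hnex x hx y hy
    constructor
    · intro h
      refine transGen_lift (fun a b hab => Relation.TransGen.single ?_) h
      rw [← hsep.eUnion]; exact Finset.mem_union_left _ hab
    · intro h
      exact backward_lemma V V1 V2 E E1 E2 u v hsep hacyc hnd E1
        le_rfl (fun hex => absurd hex hnex) y hy x hx h
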